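/- Let D be an analytically irreducible local Noetherian domain of Krull dimension greater than 1 with quotient field F and completion D̂, let V_1,…,V_n be hidden prime divisors of D, and let V'_1,…,V'_n be valuation overrings of D̂ such that V'_i ∩ F = V_i for each i. Let f be a nonzero element of D. Then for each i, V_i is irredundant in the intersection V_1 ∩ ⋯ ∩ V_n ∩ D_f if and only if V'_i is irredundant in the intersection V'_1 ∩ ⋯ ∩ V'_n ∩ D̂_f. -/

import Mathlib

namespace ArticleOT

variable {K : Type*} [Field K]

/-- The localization of `R` at the multiplicative set `A \ P`, as a subset of the field `K`. -/
def locSet (A : Subring K) (P : Ideal A) (R : Subring K) : Set K :=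
  {x : K | ∃ r ∈ R, ∃ s : A, s ∉ P ∧ x * (s : K) = r}

/-- The localization `A_P` of a subring `A` of `K` at a prime ideal `P`, as a subring of `K`. -/
def locSubring (A : Subring K) (P : Ideal A) (hP : P.IsPrime) : Subring K where
  carrier := locSet A P A
  zero_mem' := ⟨0, zero_mem A, 1, fun h => hP.ne_top ((Ideal.eq_top_iff_one P).2 h), by simp⟩
  one_mem' := ⟨1, one_mem A, 1, fun h => hP.ne_top ((Ideal.eq_top_iff_one P).2 h), by simp⟩
  add_mem' := by
    rintro x y ⟨r₁, hr₁, s₁, hs₁, e₁⟩ ⟨r₂, hr₂, s₂, hs₂, e₂⟩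
    refine ⟨r₁ * (s₂ : K) + r₂ * (s₁ : K),
      add_mem (mul_mem hr₁ s₂.2) (mul_mem hr₂ s₁.2), s₁ * s₂,
      fun h => ((hP.mem_or_mem h).elim hs₁ hs₂), ?_⟩
    push_cast
    calc (x + y) * ((s₁ : K) * (s₂ : K)) = (x * s₁) * s₂ + (y * s₂) * s₁ := by ring
    _ = r₁ * s₂ + r₂ * s₁ := by rw [e₁, e₂]
  mul_mem' := by
    rintro x y ⟨r₁, hr₁, s₁, hs₁, e₁⟩ ⟨r₂, hr₂, s₂, hs₂, e₂⟩
    refine ⟨r₁ * r₂, mul_mem hr₁ hr₂, s₁ * s₂,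
      fun h => ((hP.mem_or_mem h).elim hs₁ hs₂), ?_⟩
    push_cast
    calc (x * y) * ((s₁ : K) * (s₂ : K)) = (x * s₁) * (y * s₂) := by ring
    _ = r₁ * r₂ := by rw [e₁, e₂]
  neg_mem' := by
    rintro x ⟨r, hr, s, hs, e⟩
    exact ⟨-r, neg_mem hr, s, hs, by rw [neg_mul, e]⟩

lemma mem_locSubring {A : Subring K} {P : Ideal A} {hP : P.IsPrime} {x : K} :
    x ∈ locSubring A P hP ↔ x ∈ locSet A P A := Iff.rfl

/-- The integral closure of a subring `H` of `K` in `K`, as a subring of `K`.  When `K` is the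
quotient field of `H` this is the integral closure `H̄` of `H`. -/
noncomputable def intClosure (H : Subring K) : Subring K := (integralClosure H K).toSubring

lemma mem_intClosure_of_mem {H : Subring K} {x : K} (hx : x ∈ H) : x ∈ intClosure H := by
  have : IsIntegral (↥H) x := by
    refine ⟨Polynomial.X - Polynomial.C ⟨x, hx⟩, Polynomial.monic_X_sub_C _, ?_⟩
    simp only [Polynomial.eval₂_sub, Polynomial.eval₂_X, Polynomial.eval₂_C]
    exact sub_eq_zero_of_eq rfl
  exact this

/-- `H` is an essentially `n`-valuated subring of `R` (both subrings of the field `K`, which is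
the common quotient field): for each prime ideal `P` of the integral closure `H̄` of `H` there
are `n` (not necessarily distinct) valuation overrings `V i` of `H` with
`H̄_P = V 1 ∩ ⋯ ∩ V n ∩ R_P`. -/
noncomputable def EssNVal (H R : Subring K) (n : ℕ) : Prop :=
  ∀ P : Ideal (intClosure H), P.IsPrime →
    ∃ V : Fin n → Subring K,
      (∀ i, H ≤ V i ∧ ValuationRing (V i)) ∧
      locSet (intClosure H) P (intClosure H) =
        (⋂ i, (V i : Set K)) ∩ locSet (intClosure H) P R

/-- A prime ideal of height one: a nonzero prime all of whose strictly smaller primes are zero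
(in a domain this says precisely that the height is one). -/
def HeightOne {A : Type*} [CommRing A] (Q : Ideal A) : Prop :=
  Q.IsPrime ∧ Q ≠ ⊥ ∧ ∀ Q' : Ideal A, Q'.IsPrime → Q' < Q → Q' = ⊥

/-- `V` is a hidden prime divisor of the local domain `D` (mapped into the field `K`, its
quotient field, by `φ`): `V` is a DVR overring of `D` that dominates `D` (every nonunit of `D`
maps to a nonunit of `V`, i.e. `m_D ⊆ m_V`) and whose residue field `V/m_V` (here `m_V` is the
Jacobson radical, which is the maximal ideal since `V` is local) has transcendence degree
`d - 1` over (the isomorphic image of) the residue field of `D`, where `d = dim D`. -/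
noncomputable def IsHiddenPrimeDivisor {D : Type*} [CommRing D] (φ : D →+* K) (V : Subring K)
    (hV : ∀ r, φ r ∈ V) : Prop :=
  IsDiscreteValuationRing V ∧
  (∀ r : D, ¬ IsUnit r → ¬ IsUnit (φ.codRestrict V hV r)) ∧
  (∃ d : ℕ, ringKrullDim D = (d : ℕ) ∧
    ∃ b : Fin (d - 1) → (↥V ⧸ (⊥ : Ideal V).jacobson),
      IsTranscendenceBasis
        (((Ideal.Quotient.mk ((⊥ : Ideal V).jacobson)).comp (φ.codRestrict V hV)).range) b)

lemma phi_mem_locSubring {D : Type*} [CommRing D] (φ : D →+* K) {H : Subring K}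
    (hDH : ∀ r, φ r ∈ H) {P : Ideal H} (hP : P.IsPrime) (r : D) :
    φ r ∈ locSubring H P hP :=
  ⟨φ r, hDH r, 1, fun h => hP.ne_top ((Ideal.eq_top_iff_one P).2 h), by simp⟩

/-- `Q` is an exceptional prime ideal of the extension `H/D`: `Q` is a height one prime of `H`
such that the localization `H_Q` is a hidden prime divisor of `D`. -/
noncomputable def IsExceptionalPrime {D : Type*} [CommRing D] (φ : D →+* K) (H : Subring K)
    (hDH : ∀ r, φ r ∈ H) (Q : Ideal H) : Prop :=
  ∃ hQ : Q.IsPrime, HeightOne Q ∧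
    IsHiddenPrimeDivisor φ (locSubring H Q hQ) (phi_mem_locSubring φ hDH hQ)

/-- The extension `H/D` is essentially `n`-fibered: for each prime ideal `P` of `H`, the
extension `H_P/D` has at most `n` exceptional prime ideals. -/
noncomputable def EssNFibered {D : Type*} [CommRing D] (φ : D →+* K) (H : Subring K)
    (hDH : ∀ r, φ r ∈ H) (n : ℕ) : Prop :=
  ∀ (P : Ideal H) (hP : P.IsPrime),
    {Q : Ideal (locSubring H P hP) |
        IsExceptionalPrime φ (locSubring H P hP) (phi_mem_locSubring φ hDH hP) Q}.Finite ∧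
    {Q : Ideal (locSubring H P hP) |
        IsExceptionalPrime φ (locSubring H P hP) (phi_mem_locSubring φ hDH hP) Q}.ncard ≤ n

/-- The overring `D[1/f]` of (the image under `φ` of) `D`, as a subring of the field `K`. -/
noncomputable def awayS {D : Type*} [CommRing D] (φ : D →+* K) (f : D) : Subring K :=
  Subring.closure (Set.range φ ∪ {(φ f)⁻¹})

lemma phi_mem_awayS {D : Type*} [CommRing D] (φ : D →+* K) (f : D) (r : D) :
    φ r ∈ awayS φ f :=
  Subring.subset_closure (Or.inl ⟨r, rfl⟩)

/-- The localization of `R` at (the image of) the multiplicative set `S ⊆ D₀`, as a subring of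
the field `K`; `hR` says that `φ` maps `D₀` into `R`. -/
def subLoc {D₀ : Type*} [CommRing D₀] (φ : D₀ →+* K) (S : Submonoid D₀) (R : Subring K)
    (hR : ∀ d, φ d ∈ R) : Subring K where
  carrier := {x : K | ∃ r ∈ R, ∃ s ∈ S, x * φ s = r}
  zero_mem' := ⟨0, zero_mem R, 1, S.one_mem, by simp⟩
  one_mem' := ⟨φ 1, hR 1, 1, S.one_mem, by simp⟩
  add_mem' := by
    rintro x y ⟨r₁, hr₁, s₁, hs₁, e₁⟩ ⟨r₂, hr₂, s₂, hs₂, e₂⟩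
    refine ⟨r₁ * φ s₂ + r₂ * φ s₁, add_mem (mul_mem hr₁ (hR s₂)) (mul_mem hr₂ (hR s₁)),
      s₁ * s₂, S.mul_mem hs₁ hs₂, ?_⟩
    rw [map_mul]
    calc (x + y) * (φ s₁ * φ s₂) = (x * φ s₁) * φ s₂ + (y * φ s₂) * φ s₁ := by ring
    _ = r₁ * φ s₂ + r₂ * φ s₁ := by rw [e₁, e₂]
  mul_mem' := by
    rintro x y ⟨r₁, hr₁, s₁, hs₁, e₁⟩ ⟨r₂, hr₂, s₂, hs₂, e₂⟩
    refine ⟨r₁ * r₂, mul_mem hr₁ hr₂, s₁ * s₂, S.mul_mem hs₁ hs₂, ?_⟩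
    rw [map_mul]
    calc (x * y) * (φ s₁ * φ s₂) = (x * φ s₁) * (y * φ s₂) := by ring
    _ = r₁ * r₂ := by rw [e₁, e₂]
  neg_mem' := by
    rintro x ⟨r, hr, s, hs, e⟩
    exact ⟨-r, neg_mem hr, s, hs, by rw [neg_mul, e]⟩


/-- The localization `D_p` of (the image under `φ` of) `D` at a prime ideal `p` of `D`, as a
subset of the field `K`. -/
def locPrim {D : Type*} [CommRing D] (φ : D →+* K) (p : Ideal D) : Set K :=
  {x : K | ∃ a : D, ∃ s : D, s ∉ p ∧ x * φ s = φ a}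


section AuxiliaryLemmas

open AdicCompletion TensorProduct in
/-- Approximation of an element of an adic completion by an element of the base ring. -/
lemma exists_approx {D : Type*} [CommRing D] [IsNoetherianRing D] (I : Ideal D)
    (x : AdicCompletion I D) (N : ℕ) :
    ∃ c : D, x - algebraMap D (AdicCompletion I D) c ∈
      Ideal.map (algebraMap D (AdicCompletion I D)) (I ^ N) := by
  have hJ : (I ^ N • ⊤ : Ideal D) = I ^ N := by ext z; simp
  set J : Submodule D D := (I ^ N • ⊤ : Ideal D) with hJdef
  obtain ⟨c, hc⟩ := Submodule.Quotient.mk_surjective J (x.val N)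
  refine ⟨c, ?_⟩
  set y := x - algebraMap D (AdicCompletion I D) c with hy
  have hyN : y.val N = 0 := by
    rw [hy, AdicCompletion.val_sub]
    show x.val N - Submodule.Quotient.mk c = 0
    rw [hc, sub_self]
  haveI : Module.Finite D ↥J := Module.Finite.iff_fg.mpr (IsNoetherian.noetherian J)
  have hexact := AdicCompletion.map_exact (I := I) J.injective_subtype
    (LinearMap.exact_subtype_mkQ J) (Submodule.mkQ_surjective J)
  have hy0 : AdicCompletion.map I J.mkQ y = 0 := by
    ext n
    rw [AdicCompletion.map_val_apply, AdicCompletion.val_zero]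
    rcases le_total n N with h | h
    · have : y.val n = 0 := by
        rw [← y.property h, hyN, _root_.map_zero]
      rw [this, _root_.map_zero]; rfl
    · obtain ⟨z, hz⟩ := Submodule.Quotient.mk_surjective _ (y.val n)
      have hzN : z ∈ J := by
        have := y.property h
        rw [← hz] at this
        change (Submodule.Quotient.mk z : D ⧸ (I ^ N • ⊤ : Ideal D)) = _ at this
        rw [hyN] at this
        exact (Submodule.Quotient.mk_eq_zero _).mp this
      rw [← hz]
      show Submodule.Quotient.mk (J.mkQ z) = 0
      rw [Submodule.Quotient.mk_eq_zero]
      have : J.mkQ z = 0 := by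
        rw [Submodule.mkQ_apply, Submodule.Quotient.mk_eq_zero]; exact hzN
      rw [this]
      exact Submodule.zero_mem _
  obtain ⟨w, hw⟩ := (hexact y).mp hy0
  obtain ⟨t, ht⟩ := (ofTensorProduct_bijective_of_finite_of_isNoetherian I ↥J).2 w
  have hmem0 : ∀ s : AdicCompletion I D ⊗[D] ↥J,
      ofTensorProduct I D (AlgebraTensorModule.map
        (LinearMap.id (R := AdicCompletion I D) (M := AdicCompletion I D)) J.subtype s) ∈
        Ideal.map (algebraMap D (AdicCompletion I D)) (I ^ N) := by
    intro s
    induction s using TensorProduct.induction_on with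
    | zero => simpa using Ideal.zero_mem _
    | tmul r m =>
        have h1 : (AlgebraTensorModule.map
            (LinearMap.id (R := AdicCompletion I D) (M := AdicCompletion I D)) J.subtype)
            (r ⊗ₜ[D] m) = r ⊗ₜ[D] (m : D) := rfl
        rw [h1, ofTensorProduct_tmul]
        have hm : (m : D) ∈ I ^ N := by rw [← hJ]; exact m.2
        have h2 : algebraMap D (AdicCompletion I D) (m : D) ∈
            Ideal.map (algebraMap D (AdicCompletion I D)) (I ^ N) :=
          Ideal.mem_map_of_mem _ hm
        have hsm : r • of I D (m : D) =
            r * algebraMap D (AdicCompletion I D) (m : D) := rfl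
        change r * algebraMap D (AdicCompletion I D) (m : D) ∈ _
        exact Ideal.mul_mem_left _ _ h2
    | add s₁ s₂ h₁ h₂ =>
        rw [map_add, map_add]
        exact Ideal.add_mem _ h₁ h₂
  have hmem : ∀ s : AdicCompletion I D ⊗[D] ↥J,
      AdicCompletion.map I J.subtype (ofTensorProduct I ↥J s) ∈
        Ideal.map (algebraMap D (AdicCompletion I D)) (I ^ N) := by
    intro s
    have hnat := congrFun (congrArg DFunLike.coe (ofTensorProduct_naturality I J.subtype)) s
    simp only [LinearMap.coe_comp, Function.comp_apply] at hnat
    rw [hnat]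
    exact hmem0 s
  have := hmem t
  rw [ht, hw] at this
  exact this

/-- If a subring contains the image of `φ` and `(φ f)⁻¹`, it contains `awayS φ f`. -/
lemma awayS_le' {D : Type*} [CommRing D] (φ : D →+* K) (f : D) {S : Subring K}
    (h1 : ∀ r, φ r ∈ S) (h2 : (φ f)⁻¹ ∈ S) : awayS φ f ≤ S := by
  apply (Subring.closure_le (s := Set.range φ ∪ {(φ f)⁻¹})).2
  rintro x hx
  rcases hx with ⟨r, rfl⟩ | hx
  · exact h1 r
  · rw [Set.mem_singleton_iff] at hx
    subst hx
    exact h2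

/-- The set of fractions of elements in the image of `φ`, as a subring of `K`. -/
def fracSubring {D : Type*} [CommRing D] (φ : D →+* K) : Subring K where
  carrier := {x : K | ∃ a b : D, φ b ≠ 0 ∧ x * φ b = φ a}
  zero_mem' := ⟨0, 1, by simp⟩
  one_mem' := ⟨1, 1, by simp⟩
  add_mem' := by
    rintro x y ⟨a₁, b₁, h₁, e₁⟩ ⟨a₂, b₂, h₂, e₂⟩
    refine ⟨a₁ * b₂ + a₂ * b₁, b₁ * b₂, by rw [map_mul]; exact mul_ne_zero h₁ h₂, ?_⟩
    rw [map_mul, map_add, map_mul, map_mul]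
    calc (x + y) * (φ b₁ * φ b₂) = (x * φ b₁) * φ b₂ + (y * φ b₂) * φ b₁ := by ring
    _ = φ a₁ * φ b₂ + φ a₂ * φ b₁ := by rw [e₁, e₂]
  mul_mem' := by
    rintro x y ⟨a₁, b₁, h₁, e₁⟩ ⟨a₂, b₂, h₂, e₂⟩
    refine ⟨a₁ * a₂, b₁ * b₂, by rw [map_mul]; exact mul_ne_zero h₁ h₂, ?_⟩
    rw [map_mul, map_mul]
    calc (x * y) * (φ b₁ * φ b₂) = (x * φ b₁) * (y * φ b₂) := by ring
    _ = φ a₁ * φ a₂ := by rw [e₁, e₂]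
  neg_mem' := by
    rintro x ⟨a, b, h, e⟩
    exact ⟨-a, b, h, by rw [neg_mul, e, map_neg]⟩

/-- Elements of powers of `f` in denominators, as a subring of `K`. -/
def powFracSubring {D : Type*} [CommRing D] (ψ : D →+* K) (g : D) : Subring K where
  carrier := {x : K | ∃ (c : D) (k : ℕ), x * ψ g ^ k = ψ c}
  zero_mem' := ⟨0, 0, by simp⟩
  one_mem' := ⟨1, 0, by simp⟩
  add_mem' := by
    rintro x y ⟨c₁, k₁, e₁⟩ ⟨c₂, k₂, e₂⟩
    refine ⟨c₁ * g ^ k₂ + c₂ * g ^ k₁, k₁ + k₂, ?_⟩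
    rw [map_add, map_mul, map_mul, map_pow, map_pow, pow_add]
    calc (x + y) * (ψ g ^ k₁ * ψ g ^ k₂)
        = (x * ψ g ^ k₁) * ψ g ^ k₂ + (y * ψ g ^ k₂) * ψ g ^ k₁ := by ring
    _ = ψ c₁ * ψ g ^ k₂ + ψ c₂ * ψ g ^ k₁ := by rw [e₁, e₂]
  mul_mem' := by
    rintro x y ⟨c₁, k₁, e₁⟩ ⟨c₂, k₂, e₂⟩
    refine ⟨c₁ * c₂, k₁ + k₂, ?_⟩
    rw [map_mul, pow_add]
    calc (x * y) * (ψ g ^ k₁ * ψ g ^ k₂) = (x * ψ g ^ k₁) * (y * ψ g ^ k₂) := by ring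
    _ = ψ c₁ * ψ c₂ := by rw [e₁, e₂]
  neg_mem' := by
    rintro x ⟨c, k, e⟩
    exact ⟨-c, k, by rw [neg_mul, e, map_neg]⟩

/-- Any element of `awayS ψ g` is a fraction with denominator a power of `ψ g`. -/
lemma mem_awayS_pow {D : Type*} [CommRing D] (ψ : D →+* K) (g : D) {x : K}
    (hx : x ∈ awayS ψ g) : ∃ (c : D) (k : ℕ), x * ψ g ^ k = ψ c := by
  refine awayS_le' ψ g (S := powFracSubring ψ g) (fun r => ⟨r, 0, by simp⟩) ?_ hx
  by_cases h : ψ g = 0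
  · exact ⟨0, 0, by simp [h]⟩
  · exact ⟨1, 1, by rw [pow_one, inv_mul_cancel₀ h, map_one]⟩

end AuxiliaryLemmas

set_option maxHeartbeats 1000000 in
/-- Auxiliary version of Statement 8 with abstract ring homomorphisms. -/
lemma statement8_aux {D Dh : Type*} [CommRing D] [IsDomain D] [IsLocalRing D]
    [CommRing Dh] (φ : D →+* Dh) (ψ : Dh →+* K)
    (happrox : ∀ (chat : Dh) (N : ℕ), ∃ c : D,
      chat - φ c ∈ Ideal.map φ ((IsLocalRing.maximalIdeal D) ^ N))
    (hψinj : Function.Injective ψ) (f : D) (hφf : φ f ≠ 0)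
    (n : ℕ) (V V' : Fin n → Subring K)
    (hmem : ∀ i (r : D), (ψ.comp φ) r ∈ V i)
    (hhid : ∀ i, IsHiddenPrimeDivisor (ψ.comp φ) (V i) (hmem i))
    (hmem' : ∀ i (r : Dh), ψ r ∈ V' i)
    (hcap : ∀ i, (V' i : Set K) ∩ {x : K | ∃ a b : D,
      (ψ.comp φ) b ≠ 0 ∧ x * (ψ.comp φ) b = (ψ.comp φ) a} = (V i : Set K)) :
    ∀ i : Fin n,
      (¬ ((⋂ j ∈ ({i}ᶜ : Set (Fin n)), (V j : Set K)) ∩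
        (awayS (ψ.comp φ) f : Set K) ⊆ (V i : Set K))) ↔
      (¬ ((⋂ j ∈ ({i}ᶜ : Set (Fin n)), (V' j : Set K)) ∩
        (awayS ψ (φ f) : Set K) ⊆ (V' i : Set K))) := by
  intro i
  set Φ : D →+* K := ψ.comp φ with hΦ
  have hΦf : Φ f ≠ 0 := by
    intro h
    exact hφf (hψinj (by simpa [hΦ] using h))
  -- each `V j` is contained in `V' j`
  have hVle : ∀ j, (V j : Set K) ⊆ (V' j : Set K) := by
    intro j x hx
    rw [← hcap j] at hx
    exact hx.1
  -- `D_f` is contained in the set of fractions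
  have hDfF : (awayS Φ f : Set K) ⊆ (fracSubring Φ : Set K) := by
    apply awayS_le' Φ f
    · exact fun r => ⟨r, 1, by simp, by simp⟩
    · exact ⟨1, f, hΦf, by rw [inv_mul_cancel₀ hΦf, map_one]⟩
  -- `D_f ⊆ D̂_f`
  have hDfDhf : (awayS Φ f : Set K) ⊆ (awayS ψ (φ f) : Set K) := by
    apply awayS_le' Φ f
    · exact fun r => Subring.subset_closure (Set.mem_union_left _ ⟨φ r, rfl⟩)
    · exact Subring.subset_closure (Set.mem_union_right _ rfl)
  constructor
  · -- easy direction
    intro hA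
    obtain ⟨x, hx, hxi⟩ := Set.not_subset.mp hA
    obtain ⟨hx1, hx2⟩ := hx
    refine Set.not_subset.mpr ⟨x, ⟨?_, hDfDhf hx2⟩, ?_⟩
    · exact Set.mem_iInter₂.mpr fun j hj => hVle j (Set.mem_iInter₂.mp hx1 j hj)
    · intro h
      apply hxi
      have hxF : x ∈ (fracSubring Φ : Set K) := hDfF hx2
      have : x ∈ (V' i : Set K) ∩ {x : K | ∃ a b : D, Φ b ≠ 0 ∧ x * Φ b = Φ a} :=
        ⟨h, hxF⟩
      rw [hcap i] at this
      exact this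
  · -- hard direction
    intro hA
    obtain ⟨x, hx, hxi⟩ := Set.not_subset.mp hA
    obtain ⟨hx1, hx2⟩ := hx
    obtain ⟨chat, k, hck⟩ := mem_awayS_pow ψ (φ f) hx2
    have hΦfk : (Φ f) ^ k ≠ 0 := pow_ne_zero _ hΦf
    -- key divisibility estimate for each `j`
    have key : ∀ j : Fin n, ∃ t : ℕ, ∀ g ∈ (IsLocalRing.maximalIdeal D) ^ t,
        ∃ w, w ∈ (V j : Set K) ∧ Φ g = Φ f ^ k * w := by
      intro j
      haveI hdvr := (hhid j).1
      set a : V j := (⟨Φ f, hmem j f⟩ : V j) ^ k with ha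
      have haval : (a : K) = Φ f ^ k := by
        rw [ha]
        push_cast
        rfl
      have ha0 : a ≠ 0 := by
        intro h
        apply hΦfk
        rw [← haval, h, ZeroMemClass.coe_zero]
      obtain ⟨ϖ, hϖ⟩ := IsDiscreteValuationRing.exists_irreducible (V j)
      obtain ⟨t, u, hut⟩ := IsDiscreteValuationRing.eq_unit_mul_pow_irreducible ha0 hϖ
      refine ⟨t, fun g hg => ?_⟩
      set χ : D →+* V j := Φ.codRestrict (V j) (hmem j) with hχ
      have hmm : ∀ r ∈ IsLocalRing.maximalIdeal D, χ r ∈ IsLocalRing.maximalIdeal (V j) := by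
        intro r hr
        have hnu : ¬ IsUnit (χ r) := (hhid j).2.1 r hr
        exact IsLocalRing.mem_maximalIdeal _ |>.mpr hnu
      have hspan : IsLocalRing.maximalIdeal (V j) = Ideal.span {ϖ} := hϖ.maximalIdeal_eq
      have hpow : χ g ∈ Ideal.span {ϖ ^ t} := by
        have h1 : Ideal.map χ ((IsLocalRing.maximalIdeal D) ^ t) ≤ Ideal.span {ϖ} ^ t := by
          rw [Ideal.map_pow]
          refine Ideal.pow_right_mono ?_ t
          rw [Ideal.map_le_iff_le_comap]
          intro r hr
          rw [Ideal.mem_comap, ← hspan]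
          exact hmm r hr
        rw [Ideal.span_singleton_pow] at h1
        exact h1 (Ideal.mem_map_of_mem _ hg)
      obtain ⟨v, hv⟩ := Ideal.mem_span_singleton'.mp hpow
      have hϖt : (ϖ : V j) ^ t = (u⁻¹ : (V j)ˣ) * a := by
        rw [hut, ← mul_assoc, Units.inv_mul, one_mul]
      have hgva : χ g = v * ((u⁻¹ : (V j)ˣ) * a) := by rw [← hv, hϖt]
      refine ⟨((v * (u⁻¹ : (V j)ˣ) : V j) : K), (v * (u⁻¹ : (V j)ˣ) : V j).2, ?_⟩
      have hc := congrArg (Subtype.val) hgva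
      have hχg : ((χ g : V j) : K) = Φ g := rfl
      rw [hχg] at hc
      rw [hc]
      push_cast
      rw [haval]
      ring
    choose t ht using key
    set N : ℕ := (Finset.univ : Finset (Fin n)).sup t with hN
    obtain ⟨c, hc⟩ := happrox chat N
    -- elements of `m^N D̂` are divisible by `f^k` in each `V' j`
    have key2 : ∀ j : Fin n, ∀ z ∈ Ideal.map φ ((IsLocalRing.maximalIdeal D) ^ N),
        ψ z * ((Φ f) ^ k)⁻¹ ∈ V' j := by
      intro j z hz
      have hNt : t j ≤ N := Finset.le_sup (Finset.mem_univ j)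
      refine Submodule.span_induction ?_ ?_ ?_ ?_ hz
      · rintro _ ⟨g, hg, rfl⟩
        have hgt : g ∈ (IsLocalRing.maximalIdeal D) ^ (t j) :=
          Ideal.pow_le_pow_right hNt hg
        obtain ⟨w, hw, hgw⟩ := ht j g hgt
        have heq : ψ (φ g) * ((Φ f) ^ k)⁻¹ = w := by
          have h0 : ψ (φ g) = Φ g := rfl
          rw [h0, hgw, mul_comm (Φ f ^ k) w, mul_assoc, mul_inv_cancel₀ hΦfk, mul_one]
        rw [heq]
        exact hVle j hw
      · simpa using zero_mem (V' j)
      · intro z₁ z₂ _ _ h₁ h₂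
        rw [map_add, add_mul]
        exact add_mem h₁ h₂
      · intro r z _ h
        have heq : ψ (r • z) * ((Φ f) ^ k)⁻¹ = ψ r * (ψ z * ((Φ f) ^ k)⁻¹) := by
          rw [smul_eq_mul, map_mul, mul_assoc]
        rw [heq]
        exact mul_mem (hmem' j r) h
    have hδ : ∀ j : Fin n, (ψ chat - ψ (φ c)) * ((Φ f) ^ k)⁻¹ ∈ V' j := by
      intro j
      have h0 := key2 j _ hc
      rw [map_sub] at h0
      exact h0
    set y : K := ψ (φ c) * ((Φ f) ^ k)⁻¹ with hy
    have hxy : x = y + (ψ chat - ψ (φ c)) * ((Φ f) ^ k)⁻¹ := by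
      have hx' : x = ψ chat * ((Φ f) ^ k)⁻¹ := by
        rw [eq_mul_inv_iff_mul_eq₀ hΦfk]
        exact hck
      rw [hy]
      rw [eq_mul_inv_iff_mul_eq₀ hΦfk] at hx'
      field_simp
      linear_combination hx'
    -- `y` lies in each `V j`, `j ≠ i`, and in `D_f`, but not in `V i`
    have hyF : y ∈ {x : K | ∃ a b : D, Φ b ≠ 0 ∧ x * Φ b = Φ a} := by
      refine ⟨c, f ^ k, by rw [map_pow]; exact hΦfk, ?_⟩
      rw [map_pow, hy, mul_assoc, inv_mul_cancel₀ hΦfk, mul_one]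
      rfl
    have hyV : ∀ j : Fin n, j ≠ i → y ∈ (V j : Set K) := by
      intro j hj
      have hxVj : x ∈ (V' j : Set K) := Set.mem_iInter₂.mp hx1 j (by simpa using hj)
      have hyVj' : y ∈ (V' j : Set K) := by
        have h0 : y = x - (ψ chat - ψ (φ c)) * ((Φ f) ^ k)⁻¹ := by rw [hxy]; ring
        rw [h0]
        exact sub_mem hxVj (hδ j)
      have h1 : y ∈ (V' j : Set K) ∩ {x : K | ∃ a b : D, Φ b ≠ 0 ∧ x * Φ b = Φ a} :=
        ⟨hyVj', hyF⟩
      rw [hcap j] at h1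
      exact h1
    have hyDf : y ∈ (awayS Φ f : Set K) := by
      have h1 : ψ (φ c) ∈ awayS Φ f := phi_mem_awayS Φ f c
      have h2 : ((Φ f) ^ k)⁻¹ ∈ awayS Φ f := by
        have h3 : (Φ f)⁻¹ ∈ awayS Φ f :=
          Subring.subset_closure (Set.mem_union_right _ rfl)
        have h4 := pow_mem h3 k
        rwa [inv_pow] at h4
      exact mul_mem h1 h2
    refine Set.not_subset.mpr ⟨y, ⟨?_, hyDf⟩, ?_⟩
    · exact Set.mem_iInter₂.mpr fun j hj => hyV j (by simpa using hj)
    · intro hyVi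
      apply hxi
      have h0 : y ∈ (V' i : Set K) := hVle i hyVi
      rw [hxy]
      exact add_mem h0 (hδ i)

/-- Lemma 5.3 of the paper.  Irredundance of a hidden prime divisor in
`V 1 ∩ ⋯ ∩ V n ∩ D_f` is equivalent to irredundance of its extension in
`V' 1 ∩ ⋯ ∩ V' n ∩ D̂_f`.  Here the quotient field `F` of `D` is realized inside the quotient
field `Khat` of the completion as the set of fractions of elements of `D`. -/
theorem statement8 (D : Type*) [CommRing D] [IsDomain D] [IsLocalRing D] [IsNoetherianRing D]
    (hdim : 1 < ringKrullDim D)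
    [IsDomain (AdicCompletion (IsLocalRing.maximalIdeal D) D)]
    (Khat : Type*) [Field Khat]
    [Algebra (AdicCompletion (IsLocalRing.maximalIdeal D) D) Khat]
    [IsFractionRing (AdicCompletion (IsLocalRing.maximalIdeal D) D) Khat]
    (f : D) (hf0 : f ≠ 0)
    (n : ℕ) (V V' : Fin n → Subring Khat)
    -- each `V i` is a hidden prime divisor of `D`; it lies in the quotient field `F` of `D`
    (hmem : ∀ i (r : D), ((algebraMap (AdicCompletion (IsLocalRing.maximalIdeal D) D)
      Khat).comp (algebraMap D (AdicCompletion (IsLocalRing.maximalIdeal D) D))) r ∈ V i)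
    (hVF : ∀ i, (V i : Set Khat) ⊆ {x : Khat | ∃ a b : D,
      ((algebraMap (AdicCompletion (IsLocalRing.maximalIdeal D) D) Khat).comp
        (algebraMap D (AdicCompletion (IsLocalRing.maximalIdeal D) D))) b ≠ 0 ∧
      x * ((algebraMap (AdicCompletion (IsLocalRing.maximalIdeal D) D) Khat).comp
        (algebraMap D (AdicCompletion (IsLocalRing.maximalIdeal D) D))) b =
      ((algebraMap (AdicCompletion (IsLocalRing.maximalIdeal D) D) Khat).comp
        (algebraMap D (AdicCompletion (IsLocalRing.maximalIdeal D) D))) a})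
    (hhid : ∀ i, IsHiddenPrimeDivisor
      ((algebraMap (AdicCompletion (IsLocalRing.maximalIdeal D) D) Khat).comp
        (algebraMap D (AdicCompletion (IsLocalRing.maximalIdeal D) D))) (V i) (hmem i))
    -- each `V' i` is a valuation overring of the completion extending `V i`,
    -- i.e. `V' i ∩ F = V i`
    (hmem' : ∀ i (r : AdicCompletion (IsLocalRing.maximalIdeal D) D),
      algebraMap (AdicCompletion (IsLocalRing.maximalIdeal D) D) Khat r ∈ V' i)
    (hval' : ∀ i, ValuationRing (V' i))
    (hcap : ∀ i, (V' i : Set Khat) ∩ {x : Khat | ∃ a b : D,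
      ((algebraMap (AdicCompletion (IsLocalRing.maximalIdeal D) D) Khat).comp
        (algebraMap D (AdicCompletion (IsLocalRing.maximalIdeal D) D))) b ≠ 0 ∧
      x * ((algebraMap (AdicCompletion (IsLocalRing.maximalIdeal D) D) Khat).comp
        (algebraMap D (AdicCompletion (IsLocalRing.maximalIdeal D) D))) b =
      ((algebraMap (AdicCompletion (IsLocalRing.maximalIdeal D) D) Khat).comp
        (algebraMap D (AdicCompletion (IsLocalRing.maximalIdeal D) D))) a} = (V i : Set Khat)) :
    -- conclusion: `V i` is irredundant in `V 1 ∩ ⋯ ∩ V n ∩ D_f` iff `V' i` is irredundant in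
    -- `V' 1 ∩ ⋯ ∩ V' n ∩ D̂_f`
    ∀ i : Fin n,
      (¬ ((⋂ j ∈ ({i}ᶜ : Set (Fin n)), (V j : Set Khat)) ∩
        (awayS ((algebraMap (AdicCompletion (IsLocalRing.maximalIdeal D) D) Khat).comp
          (algebraMap D (AdicCompletion (IsLocalRing.maximalIdeal D) D))) f : Set Khat)
        ⊆ (V i : Set Khat))) ↔
      (¬ ((⋂ j ∈ ({i}ᶜ : Set (Fin n)), (V' j : Set Khat)) ∩
        (awayS (algebraMap (AdicCompletion (IsLocalRing.maximalIdeal D) D) Khat)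
          (algebraMap D (AdicCompletion (IsLocalRing.maximalIdeal D) D) f) : Set Khat)
        ⊆ (V' i : Set Khat))) := by
  have hφf : algebraMap D (AdicCompletion (IsLocalRing.maximalIdeal D) D) f ≠ 0 := by
    intro h0
    apply hf0
    have hfm : ∀ m : ℕ, f ∈ (IsLocalRing.maximalIdeal D) ^ m := by
      intro m
      have h1 : (algebraMap D (AdicCompletion (IsLocalRing.maximalIdeal D) D) f).val m = 0 := by
        rw [h0]; rfl
      have h2 : (Submodule.Quotient.mk f :
          D ⧸ ((IsLocalRing.maximalIdeal D) ^ m • ⊤ : Ideal D)) = 0 := h1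
      have h3 := (Submodule.Quotient.mk_eq_zero _).mp h2
      have h4 : ((IsLocalRing.maximalIdeal D) ^ m • ⊤ : Ideal D) =
          (IsLocalRing.maximalIdeal D) ^ m := by ext z; simp
      rw [h4] at h3
      exact h3
    have hbot := Ideal.iInf_pow_eq_bot_of_isLocalRing (IsLocalRing.maximalIdeal D)
      (Ideal.IsMaximal.ne_top inferInstance)
    have hfb : f ∈ (⊥ : Ideal D) := by
      rw [← hbot]
      exact Submodule.mem_iInf _ |>.mpr hfm
    simpa using hfb
  exact statement8_aux
    (algebraMap D (AdicCompletion (IsLocalRing.maximalIdeal D) D))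
    (algebraMap (AdicCompletion (IsLocalRing.maximalIdeal D) D) Khat)
    (fun chat N => exists_approx (IsLocalRing.maximalIdeal D) chat N)
    (IsFractionRing.injective _ _) f hφf n V V' hmem hhid hmem' hcap

end ArticleOT
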